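/- Assume A ≠ 0, νˢ ≠ 1 (so D ≠ 0), and suppose the transcritical bifurcation relation T₂₃ holds: ζ·D + A·ζˢ = 0 (equivalently ζ/A = −ζˢ/D, which is exactly αˢ = (ζˢ/ζ)·((κ₁ − ν)γ₁ − μν)·α/((γ₁ + μ)(1 − νˢ))). Then the coex-1 equilibrium v₃, with coordinates x₁ = ζ/A, x₂ = 0, zˢ = (1 − x₁)/(αζˢ/(C·x₁) + αˢ + Dα/C), z = (1 − x₁ − αˢ·zˢ)/α, y₁ = (C/μ)·x₁·z, y₂ = 0, yˢ = (x₁/γˢ)·(C·z + αˢ·zˢ), coincides with the gen-free-1 equilibrium v₂, whose coordinates are x₁ = −ζˢ/D, x₂ = 0, yˢ = −ζˢ(ζˢ + D)/(D²γˢ), y₁ = 0, y₂ = 0, zˢ = 1/αˢ + ζˢ/(αˢD), z = 0. -/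

import Mathlib

theorem T₂₃_v₃_coincides_with_v₂
    (α αs β₁ β₂ μ γs γ₁ γ₂ κ₁ κ₂ ν νs ζs ζ : ℝ)
    (hα : 0 < α) (hαs : 0 < αs) (hβ₁pos : 0 < β₁) (hβ₂pos : 0 < β₂)
    (hμ : 0 < μ) (hγs : 0 < γs) (hγ₁ : 0 < γ₁) (hγ₂ : 0 < γ₂)
    (hκ₁ : 0 < κ₁) (hκ₂ : 0 < κ₂) (hν : 0 < ν) (hνs : 0 < νs)
    (hζs : 0 < ζs) (hζ : 0 < ζ)
    (hνs1 : νs ≠ 1)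
    (A : ℝ) (hA : A = α * (γ₁ * κ₁ / (μ + γ₁) - ν))
    (C : ℝ) (hC : C = α * μ / (μ + γ₁))
    (D : ℝ) (hD : D = αs * (νs - 1))
    (hA0 : A ≠ 0)
    (hT : ζ * D + A * ζs = 0)
    (x₁ x₂ ys y₁ y₂ zs z : ℝ)
    (hx₁ : x₁ = ζ / A) (hx₂ : x₂ = 0)
    (hzs : zs = (1 - x₁) / (α * ζs / (C * x₁) + αs + D * α / C))
    (hz : z = (1 - x₁ - αs * zs) / α)
    (hy₁ : y₁ = (C / μ) * x₁ * z) (hy₂ : y₂ = 0)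
    (hys : ys = (x₁ / γs) * (C * z + αs * zs)) :
    (x₁, x₂, ys, y₁, y₂, zs, z) =
      ((-ζs / D : ℝ), (0 : ℝ), (-(ζs * (ζs + D)) / (D ^ 2 * γs) : ℝ),
        (0 : ℝ), (0 : ℝ), (1 / αs + ζs / (αs * D) : ℝ), (0 : ℝ)) := by
  have hD0 : D ≠ 0 := by
    rw [hD]
    exact mul_ne_zero hαs.ne' (sub_ne_zero.mpr hνs1)
  have hC0 : C ≠ 0 := by
    rw [hC]
    positivity
  have hx1D : x₁ = -ζs / D := by
    rw [hx₁]
    field_simp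
    nlinarith [hT]
  have hx10 : x₁ ≠ 0 := by
    rw [hx₁]
    exact div_ne_zero hζ.ne' hA0
  have hden : α * ζs / (C * x₁) + αs + D * α / C = αs := by
    rw [hx1D]
    field_simp
    ring
  have hzs' : zs = (1 - x₁) / αs := by rw [hzs, hden]
  have hzsval : zs = 1 / αs + ζs / (αs * D) := by
    rw [hzs', hx1D]
    field_simp
    ring
  have hz0 : z = 0 := by
    rw [hz, hzs']
    field_simp
    ring
  have hysval : ys = -(ζs * (ζs + D)) / (D ^ 2 * γs) := by
    rw [hys, hz0, hzsval, hx1D]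
    field_simp
    ring
  rw [hx1D, hx₂, hysval, hy₁, hz0, hy₂, hzsval]
  norm_num
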